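/- Let r > 1 be a real number and let d be an odd positive integer with d ≤ 2r − 2. Then d^{-r} > ∑_{n ≥ d+2, n odd} n^{-r}, where the sum is over all odd integers n ≥ d + 2. -/

import Mathlib

/-- For real `r > 1` and an odd positive integer `d ≤ 2r − 2`,
`d^{-r} > ∑_{n ≥ d+2, n odd} n^{-r}`. -/
theorem stmt10 (r : ℝ) (hr : 1 < r) (d : ℕ) (hodd : Odd d) (hd : 0 < d)
    (hdr : (d : ℝ) ≤ 2 * r - 2) :
    ∑' n : {n : ℕ // Odd n ∧ d + 2 ≤ n}, ((n : ℕ) : ℝ) ^ (-r) < (d : ℝ) ^ (-r) := by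
  have hr1 : (0:ℝ) < r - 1 := by linarith
  have hdpos : (0:ℝ) < (d:ℝ) := by exact_mod_cast hd
  set f : ℕ → ℝ := fun k => ((d : ℝ) + 2*k + 2) ^ (-r) with hf
  set g : ℕ → ℝ := fun k => ((d : ℝ) + 2*k) ^ (1-r) / (2*(r-1)) with hg
  set u : ℕ → ℝ := fun k => g k - g (k+1) with hu
  have hfpos : ∀ k, 0 < f k := fun k => Real.rpow_pos_of_pos (by positivity) _
  -- key pointwise strict inequality via MVT
  have key : ∀ k, f k < u k := by
    intro k
    set a : ℝ := (d:ℝ) + 2*k with hadef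
    have ha : (0:ℝ) < a := by positivity
    obtain ⟨c, hc, hderiv⟩ := exists_deriv_eq_slope (fun x => x ^ (1-r))
      (by linarith : a < a+2)
      (fun x hx => (Real.continuousAt_rpow_const x (1-r)
        (Or.inl (ne_of_gt (lt_of_lt_of_le ha hx.1)))).continuousWithinAt)
      (fun x hx => ((Real.hasDerivAt_rpow_const
        (Or.inl (ne_of_gt (lt_trans ha hx.1)))).differentiableAt).differentiableWithinAt)
    have hcpos : 0 < c := lt_trans ha hc.1
    rw [Real.deriv_rpow_const c (1-r)] at hderiv
    have h1r : (1:ℝ) - r - 1 = -r := by ring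
    rw [h1r] at hderiv
    have hlt : (a+2) ^ (-r) < c ^ (-r) :=
      Real.rpow_lt_rpow_of_neg hcpos hc.2 (by linarith)
    have hgk1 : (d:ℝ) + 2*((k:ℝ)+1) = a + 2 := by rw [hadef]; ring
    have huk : u k = (a ^ (1-r) - (a+2) ^ (1-r)) / (2*(r-1)) := by
      simp only [hu, hg]
      push_cast
      rw [hgk1]
      ring
    have hslope : (1-r) * c ^ (-r) = ((a+2) ^ (1-r) - a ^ (1-r)) / 2 := by
      rw [hderiv]; ring_nf
    have hukc : u k = c ^ (-r) := by
      rw [huk]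
      field_simp at hslope ⊢
      nlinarith [hslope]
    have hfk : f k = (a+2) ^ (-r) := by simp only [hf, hadef]
    rw [hfk, hukc]
    exact hlt
  have hgnonneg : ∀ k, 0 ≤ g k := by
    intro k
    apply div_nonneg (Real.rpow_nonneg (by positivity) _) (by linarith)
  have hsumrange : ∀ n, ∑ i ∈ Finset.range n, u i ≤ g 0 := by
    intro n
    rw [hu, Finset.sum_range_sub' g n]
    linarith [hgnonneg n]
  have hunonneg : ∀ k, 0 ≤ u k := fun k => le_of_lt (lt_trans (hfpos k) (key k))
  have hsum_u : Summable u := summable_of_sum_range_le hunonneg hsumrange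
  have hsum_f : Summable f :=
    Summable.of_nonneg_of_le (fun k => (hfpos k).le) (fun k => (key k).le) hsum_u
  have hlt1 : ∑' k, f k < ∑' k, u k :=
    Summable.tsum_lt_tsum (fun k => (key k).le) (key 0) hsum_f hsum_u
  have hlt2 : ∑' k, u k ≤ g 0 := Summable.tsum_le_of_sum_range_le hsum_u hsumrange
  have hg0 : g 0 ≤ (d : ℝ) ^ (-r) := by
    have hdr' : (d:ℝ) ^ (1-r) = (d:ℝ) * (d:ℝ) ^ (-r) := by
      rw [show (1:ℝ) - r = 1 + (-r) by ring, Real.rpow_add hdpos,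
        Real.rpow_one]
    have hpos : (0:ℝ) < (d:ℝ) ^ (-r) := Real.rpow_pos_of_pos hdpos _
    simp only [hg]
    push_cast
    rw [mul_zero, add_zero, hdr', div_le_iff₀ (by linarith)]
    nlinarith
  -- reindex the tsum
  have hoddmem : ∀ k : ℕ, Odd (d + 2*k + 2) ∧ d + 2 ≤ d + 2*k + 2 := by
    intro k
    obtain ⟨m, hm⟩ := hodd
    exact ⟨⟨m + k + 1, by omega⟩, by omega⟩
  have he := Equiv.tsum_eq
    (⟨fun k => ⟨d + 2*k + 2, hoddmem k⟩,
      fun n => ((n : ℕ) - d - 2) / 2,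
      fun k => by simp only; omega,
      fun n => by
        obtain ⟨n, hn⟩ := n
        obtain ⟨m, hm⟩ := hodd
        obtain ⟨m', hm'⟩ := hn.1
        exact Subtype.ext (by simp only; omega)⟩ :
      ℕ ≃ {n : ℕ // Odd n ∧ d + 2 ≤ n})
    (fun n : {n : ℕ // Odd n ∧ d + 2 ≤ n} => ((n : ℕ) : ℝ) ^ (-r))
  simp only [Equiv.coe_fn_mk] at he
  rw [← he]
  have : ∀ k : ℕ, (((d + 2*k + 2 : ℕ) : ℝ)) ^ (-r) = f k := by
    intro k; simp only [hf]; push_cast; ring_nf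
  calc ∑' k : ℕ, (((⟨d + 2*k + 2, hoddmem k⟩ : {n : ℕ // Odd n ∧ d + 2 ≤ n}) : ℕ) : ℝ) ^ (-r)
        = ∑' k : ℕ, f k := by
          apply tsum_congr; intro k
          simp only
          exact this k
    _ < ∑' k, u k := hlt1
    _ ≤ g 0 := hlt2
    _ ≤ (d : ℝ) ^ (-r) := hg0
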